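/- arXiv:1401.0099 — 3 statements merged into one kernel-verified Lean document; each statement's English description precedes it below -/
import Mathlib

section
/- If {W_x : x ∈ Y} is an abelian unitary system of size s on C^d, then there exists a unitary U and mutually orthogonal diagonal matrices D_x with all diagonal entries of modulus 1 and tr D_x = 0 such that W_x = U D_x U* for each x; moreover the (s+1) × d matrix H whose rows are the all-ones vector and the diagonals of the D_x satisfies H H* = d·I_{s+1} and |H_{jk}| = 1 for every entry, i.e., H is a partial complex Hadamard matrix. -/
open Matrix

set_option maxHeartbeats 1000000

section Aux

variable {d : ℕ}

lemma aux_herm_re (A : Matrix (Fin d) (Fin d) ℂ) : (A + Aᴴ).IsHermitian := by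
  simp [Matrix.IsHermitian, conjTranspose_add, add_comm]

lemma aux_herm_im (A : Matrix (Fin d) (Fin d) ℂ) : ((-Complex.I) • (A - Aᴴ)).IsHermitian := by
  ext i j
  simp only [Matrix.conjTranspose_apply, Matrix.smul_apply, Matrix.sub_apply, smul_eq_mul,
    star_mul', star_sub, star_neg, Complex.star_def, Complex.conj_I, RingHom.id_apply,
    Complex.conj_conj]
  ring

lemma aux_toEuclideanLin_mul (A B : Matrix (Fin d) (Fin d) ℂ) :
    Matrix.toEuclideanLin (A * B) = Matrix.toEuclideanLin A * Matrix.toEuclideanLin B := by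
  simp only [Matrix.toEuclideanLin_eq_toLin,
    Matrix.toLin_mul (PiLp.basisFun 2 ℂ (Fin d)) (PiLp.basisFun 2 ℂ (Fin d))
      (PiLp.basisFun 2 ℂ (Fin d)),
    Module.End.mul_eq_comp]

/-- Joint eigenbasis for a finite commuting family of symmetric operators. -/
lemma aux_joint_eigenbasis {ι : Type*} [Fintype ι] {E : Type*} [NormedAddCommGroup E]
    [InnerProductSpace ℂ E] [FiniteDimensional ℂ E] {n : ℕ} (hn : Module.finrank ℂ E = n)
    (T : ι → E →ₗ[ℂ] E) (hTsym : ∀ i, (T i).IsSymmetric)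
    (hTcomm : ∀ i j, Commute (T i) (T j)) :
    ∃ (b : OrthonormalBasis (Fin n) ℂ E) (χ : Fin n → ι → ℂ),
      ∀ i j, T i (b j) = χ j i • b j := by
  classical
  set S := {χ : ι → ℂ // (⨅ i, Module.End.eigenspace (T i) (χ i)) ≠ ⊥} with hS
  haveI : Fintype S := by
    apply Fintype.ofInjective (β := ∀ i, Module.End.Eigenvalues (T i))
      (fun χ => fun i => ⟨χ.1 i, by
        have h := χ.2
        show Module.End.eigenspace (T i) (χ.1 i) ≠ ⊥
        intro h0
        exact h (le_bot_iff.mp (le_trans (iInf_le _ i) h0.le))⟩)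
    intro χ₁ χ₂ h
    exact Subtype.ext (funext fun i => congrArg Subtype.val (congrFun h i))
  set V : S → Submodule ℂ E :=
    fun χ => ⨅ i, Module.End.eigenspace (T i) (χ.1 i) with hV
  have hOF : OrthogonalFamily ℂ (fun χ : S => V χ) (fun χ => (V χ).subtypeₗᵢ) :=
    (LinearMap.IsSymmetric.orthogonalFamily_iInf_eigenspaces hTsym).comp Subtype.val_injective
  have htop : (⨆ χ : S, V χ) = ⊤ := by
    rw [← LinearMap.IsSymmetric.iSup_iInf_eq_top_of_commute hTsym fun i j _ => hTcomm i j]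
    exact iSup_ne_bot_subtype _
  have hInt : DirectSum.IsInternal V := by
    rw [hOF.isInternal_iff, htop, Submodule.top_orthogonal_eq_bot]
  refine ⟨hInt.subordinateOrthonormalBasis hn hOF,
    fun j => (hInt.subordinateOrthonormalBasisIndex hn j hOF).1, fun i j => ?_⟩
  have hbmem := hInt.subordinateOrthonormalBasis_subordinate hn j hOF
  exact Module.End.mem_eigenspace_iff.mp ((Submodule.mem_iInf _).mp hbmem i)

end Aux

/-- An abelian unitary system is simultaneously diagonalizable by a unitary, with
traceless mutually orthogonal unimodular-diagonal matrices; adding the all-ones row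
to the diagonals yields a partial complex Hadamard matrix. -/
theorem stmt3 {d : ℕ} (hd : 2 ≤ d) {Y : Type*} [Fintype Y] [DecidableEq Y] [Nonempty Y]
    (W : Y → Matrix (Fin d) (Fin d) ℂ)
    (hunit : ∀ y, W y ∈ Matrix.unitaryGroup (Fin d) ℂ)
    (htr : ∀ y, Matrix.trace (W y) = 0)
    (horth : ∀ x y, x ≠ y → Matrix.trace ((W x)ᴴ * W y) = 0)
    (hcomm : ∀ x y, W x * W y = W y * W x) :
    ∃ U ∈ Matrix.unitaryGroup (Fin d) ℂ, ∃ D : Y → Matrix (Fin d) (Fin d) ℂ,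
      (∀ x, (D x).IsDiag) ∧
      (∀ x j, ‖D x j j‖ = 1) ∧
      (∀ x, Matrix.trace (D x) = 0) ∧
      (∀ x y, x ≠ y → Matrix.trace ((D x)ᴴ * D y) = 0) ∧
      (∀ x, W x = U * D x * Uᴴ) ∧
      ∃ H : Option Y → Fin d → ℂ,
        (∀ j, H none j = 1) ∧
        (∀ x j, H (some x) j = D x j j) ∧
        (∀ a j, ‖H a j‖ = 1) ∧
        (∀ a b, ∑ j, H a j * star (H b j) = if a = b then (d : ℂ) else 0) := by
  classical
  -- Unitarity facts
  have hU1 : ∀ y, (W y)ᴴ * W y = 1 := fun y => by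
    simpa [Matrix.star_eq_conjTranspose] using Matrix.mem_unitaryGroup_iff'.mp (hunit y)
  have hU2 : ∀ y, W y * (W y)ᴴ = 1 := fun y => by
    simpa [Matrix.star_eq_conjTranspose] using Matrix.mem_unitaryGroup_iff.mp (hunit y)
  -- Extended commutation facts
  have hstar : ∀ x y, W x * (W y)ᴴ = (W y)ᴴ * W x := by
    intro x y
    calc W x * (W y)ᴴ = ((W y)ᴴ * W y) * (W x * (W y)ᴴ) := by rw [hU1, one_mul]
      _ = (W y)ᴴ * (W y * W x) * (W y)ᴴ := by simp only [mul_assoc]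
      _ = (W y)ᴴ * (W x * W y) * (W y)ᴴ := by rw [hcomm]
      _ = ((W y)ᴴ * W x) * (W y * (W y)ᴴ) := by simp only [mul_assoc]
      _ = (W y)ᴴ * W x := by rw [hU2, mul_one]
  have hstar2 : ∀ x y, (W x)ᴴ * (W y)ᴴ = (W y)ᴴ * (W x)ᴴ := by
    intro x y
    have := congrArg Matrix.conjTranspose (hcomm y x)
    simpa [Matrix.conjTranspose_mul] using this
  -- Hermitian parts
  set M : Y ⊕ Y → Matrix (Fin d) (Fin d) ℂ :=
    Sum.elim (fun y => W y + (W y)ᴴ) (fun y => (-Complex.I) • (W y - (W y)ᴴ)) with hM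
  have hHerm : ∀ i, (M i).IsHermitian := by
    rintro (y | y)
    · exact aux_herm_re (W y)
    · exact aux_herm_im (W y)
  have cWW : ∀ x y, Commute (W x) (W y) := fun x y => hcomm x y
  have cWH : ∀ x y, Commute (W x) ((W y)ᴴ) := fun x y => hstar x y
  have cHW : ∀ x y, Commute ((W x)ᴴ) (W y) := fun x y => (hstar y x).symm
  have cHH : ∀ x y, Commute ((W x)ᴴ) ((W y)ᴴ) := fun x y => hstar2 x y
  have hMcomm : ∀ i j, Commute (M i) (M j) := by
    rintro (x | x) (y | y) <;> simp only [hM, Sum.elim_inl, Sum.elim_inr]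
    · exact ((cWW x y).add_right (cWH x y)).add_left ((cHW x y).add_right (cHH x y))
    · exact ((((cWW x y).sub_right (cWH x y)).add_left
        ((cHW x y).sub_right (cHH x y))).smul_right (-Complex.I))
    · exact ((((cWW x y).add_right (cWH x y)).sub_left
        ((cHW x y).add_right (cHH x y))).smul_left (-Complex.I))
    · exact (((((cWW x y).sub_right (cWH x y)).sub_left
        ((cHW x y).sub_right (cHH x y))).smul_left (-Complex.I)).smul_right (-Complex.I))
  -- Joint eigenbasis
  have hn : Module.finrank ℂ (EuclideanSpace ℂ (Fin d)) = d := finrank_euclideanSpace_fin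
  obtain ⟨b, χ, heig⟩ := aux_joint_eigenbasis hn (fun i => Matrix.toEuclideanLin (M i))
    (fun i => Matrix.isHermitian_iff_isSymmetric.mp (hHerm i))
    (fun i j => by
      show _ * _ = _ * _
      rw [← aux_toEuclideanLin_mul, ← aux_toEuclideanLin_mul, hMcomm i j])
  -- eigenvalues of W
  set μ : Y → Fin d → ℂ :=
    fun y j => (χ j (Sum.inl y) + Complex.I * χ j (Sum.inr y)) / 2 with hμ
  have hWdec : ∀ y, W y = (1 / 2 : ℂ) • M (Sum.inl y) + (Complex.I / 2) • M (Sum.inr y) := by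
    intro y
    ext i k
    simp only [hM, Sum.elim_inl, Sum.elim_inr, Matrix.add_apply, Matrix.smul_apply,
      Matrix.sub_apply, smul_eq_mul]
    ring_nf
    rw [Complex.I_sq]
    ring
  have hWb : ∀ y j, Matrix.toEuclideanLin (W y) (b j) = μ y j • b j := by
    intro y j
    rw [hWdec y, map_add, LinearMap.add_apply, _root_.map_smul, _root_.map_smul,
      LinearMap.smul_apply, LinearMap.smul_apply, heig (Sum.inl y) j, heig (Sum.inr y) j,
      smul_smul, smul_smul, ← add_smul]
    congr 1
    rw [hμ]
    ring
  have hmv : ∀ y j, W y *ᵥ ⇑(b j) = μ y j • ⇑(b j) := fun y j => by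
    simpa only [Matrix.toEuclideanLin_apply, WithLp.ofLp_smul] using congr(⇑$(hWb y j))
  -- the unitary
  set Ub : Matrix (Fin d) (Fin d) ℂ :=
    (EuclideanSpace.basisFun (Fin d) ℂ).toBasis.toMatrix b.toBasis with hUb
  have hUu : Ub ∈ Matrix.unitaryGroup (Fin d) ℂ :=
    (EuclideanSpace.basisFun (Fin d) ℂ).toMatrix_orthonormalBasis_mem_unitary b
  have hUs1 : Ub * star Ub = 1 := Matrix.mem_unitaryGroup_iff.mp hUu
  have hUs2 : star Ub * Ub = 1 := Matrix.mem_unitaryGroup_iff'.mp hUu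
  have hUmv : ∀ j, Ub *ᵥ Pi.single j 1 = ⇑(b j) := fun j => by
    funext i
    simp only [Matrix.mulVec_single, MulOpposite.op_one, one_smul]
    rfl
  have hUmv' : ∀ j, (star Ub) *ᵥ ⇑(b j) = Pi.single j 1 := fun j => by
    rw [← hUmv, Matrix.mulVec_mulVec, hUs2, Matrix.one_mulVec]
  -- diagonalization
  set D : Y → Matrix (Fin d) (Fin d) ℂ := fun y => Matrix.diagonal (μ y) with hD
  have hdiag : ∀ y, star Ub * W y * Ub = D y := by
    intro y
    apply Matrix.toEuclideanLin.injective
    apply Module.Basis.ext (EuclideanSpace.basisFun (Fin d) ℂ).toBasis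
    intro j
    simp only [Matrix.toEuclideanLin_apply, OrthonormalBasis.coe_toBasis,
      EuclideanSpace.basisFun_apply, EuclideanSpace.ofLp_single, ← Matrix.mulVec_mulVec, hUmv,
      hmv, Matrix.mulVec_smul, hUmv', hD, Matrix.diagonal_mulVec_single, mul_one]
    apply PiLp.ext
    intro i
    simp only [PiLp.toLp_single, WithLp.toLp_smul, PiLp.smul_apply, Pi.smul_apply, Pi.single_apply,
      EuclideanSpace.single_apply, smul_eq_mul, mul_ite, mul_one, mul_zero]
  have hWD : ∀ y, W y = Ub * D y * star Ub := by
    intro y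
    rw [← hdiag y]
    calc W y = (Ub * star Ub) * W y * (Ub * star Ub) := by rw [hUs1, one_mul, mul_one]
      _ = Ub * (star Ub * W y * Ub) * star Ub := by simp only [mul_assoc]
  -- cancellation helpers
  have hcan1 : ∀ X : Matrix (Fin d) (Fin d) ℂ, Ub * (star Ub * X) = X := fun X => by
    rw [← mul_assoc, hUs1, one_mul]
  have htrconj : ∀ P : Matrix (Fin d) (Fin d) ℂ,
      Matrix.trace (star Ub * P * Ub) = Matrix.trace P := by
    intro P
    rw [Matrix.trace_mul_cycle, hUs1, one_mul]
  have hDdef : ∀ y, D y = star Ub * W y * Ub := fun y => (hdiag y).symm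
  have hDstar : ∀ y, star (D y) = star Ub * (W y)ᴴ * Ub := by
    intro y
    rw [hDdef y]
    simp only [StarMul.star_mul, star_star, Matrix.star_eq_conjTranspose, mul_assoc,
      Matrix.conjTranspose_conjTranspose]
  have hDHmul : ∀ x y, (D x)ᴴ * D y = star Ub * ((W x)ᴴ * W y) * Ub := by
    intro x y
    rw [← Matrix.star_eq_conjTranspose, hDstar x, hDdef y]
    calc star Ub * (W x)ᴴ * Ub * (star Ub * W y * Ub)
        = star Ub * (W x)ᴴ * (Ub * (star Ub * (W y * Ub))) := by simp only [mul_assoc]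
      _ = star Ub * (W x)ᴴ * (W y * Ub) := by rw [hcan1]
      _ = star Ub * ((W x)ᴴ * W y) * Ub := by simp only [mul_assoc]
  -- trace facts for D
  have htrD : ∀ y, Matrix.trace (D y) = 0 := fun y => by
    rw [hDdef y, htrconj, htr]
  have horthD : ∀ x y, x ≠ y → Matrix.trace ((D x)ᴴ * D y) = 0 := fun x y hxy => by
    rw [hDHmul, htrconj, horth x y hxy]
  -- unimodularity of eigenvalues
  have hDdag : ∀ y, (D y)ᴴ * D y = 1 := by
    intro y
    rw [hDHmul, hU1, mul_one, hUs2]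
  have hunimod : ∀ y j, star (μ y j) * μ y j = 1 := by
    intro y j
    have h := hDdag y
    rw [hD] at h
    simp only [Matrix.diagonal_conjTranspose, Matrix.diagonal_mul_diagonal] at h
    have h2 := congrFun (congrFun h j) j
    simpa [Matrix.diagonal_apply_eq, Matrix.one_apply_eq] using h2
  have habs : ∀ y j, ‖μ y j‖ = 1 := by
    intro y j
    have h := hunimod y j
    have h' : (starRingEnd ℂ) (μ y j) * μ y j = 1 := h
    have hns : Complex.normSq (μ y j) = 1 := by
      have h1 : ((Complex.normSq (μ y j) : ℂ)) = 1 := by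
        rw [Complex.normSq_eq_conj_mul_self]
        exact h'
      exact_mod_cast h1
    have hsq := Complex.sq_norm (μ y j)
    nlinarith [norm_nonneg (μ y j), hsq, hns]
  have hsum_tr : ∀ y, ∑ j, μ y j = 0 := fun y => by
    simpa [hD, Matrix.trace_diagonal] using htrD y
  have hsum_orth : ∀ x y, x ≠ y → ∑ j, star (μ x j) * μ y j = 0 := by
    intro x y hxy
    have h := horthD x y hxy
    simpa [hD, Matrix.diagonal_conjTranspose, Matrix.diagonal_mul_diagonal,
      Matrix.trace_diagonal] using h
  -- assemble
  refine ⟨Ub, hUu, D, ?_, ?_, htrD, horthD, ?_, ?_⟩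
  · intro x
    exact Matrix.isDiag_diagonal (μ x)
  · intro x j
    simpa [hD, Matrix.diagonal_apply_eq] using habs x j
  · intro x
    rw [hWD x, Matrix.star_eq_conjTranspose]
  · refine ⟨fun a j => a.elim 1 (fun x => μ x j), fun j => rfl, ?_, ?_, ?_⟩
    · intro x j
      simp [hD, Matrix.diagonal_apply_eq]
    · rintro (_ | x) j
      · simp
      · simpa using habs x j
    · rintro (_ | x) (_ | y)
      · simp [Finset.card_univ]
      · simp only [Option.elim, one_mul, reduceCtorEq, if_false]
        calc ∑ j, star (μ y j) = star (∑ j, μ y j) := by rw [star_sum]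
          _ = 0 := by rw [hsum_tr y, star_zero]
      · simp only [Option.elim, star_one, mul_one, reduceCtorEq, if_false]
        exact hsum_tr x
      · by_cases hxy : x = y
        · subst hxy
          simp only [if_pos rfl, Option.elim]
          have h1 : ∀ j, μ x j * (starRingEnd ℂ) (μ x j) = 1 := fun j => by
            rw [mul_comm]; exact hunimod x j
          simp [h1, Finset.card_univ]
        · have hne : (some x : Option Y) ≠ some y := by simpa using hxy
          rw [if_neg hne]
          have h := hsum_orth y x (Ne.symm hxy)
          calc ∑ j, (some x).elim 1 (fun x => μ x j) * star ((some y).elim 1 fun x => μ x j)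
              = ∑ j, star (μ y j) * μ x j := by
                apply Finset.sum_congr rfl
                intro j _
                simp [mul_comm]
            _ = 0 := h
end

section
/- Two unitary bases U and U′ on a d-dimensional Hilbert space are equivalent (there exist unitaries V₁, V₂ and a bijection x ↦ x′ of X with U′_{x′} = V₁ U_x V₂) if and only if for some tag T = (x₀, U_{x₀}, W) associated to U and some tag T′ = (x₀′, U′_{x₀′}, W′) associated to U′, the unitary systems W and W′ are collectively unitarily equivalent (there is a unitary V and a bijection with W′_{x′} = V* W_x V for all x ≠ x₀). -/
open Matrix

/-- Extend a bijection between complements of points to a bijection of the whole type. -/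
def extEquiv {X : Type*} [DecidableEq X] (x₀ x₀' : X)
    (g : {x : X // x ≠ x₀} ≃ {x : X // x ≠ x₀'}) : X ≃ X where
  toFun x := if h : x = x₀ then x₀' else (g ⟨x, h⟩ : X)
  invFun y := if h : y = x₀' then x₀ else (g.symm ⟨y, h⟩ : X)
  left_inv x := by
    by_cases h : x = x₀
    · simp [h]
    · have h2 : (g ⟨x, h⟩ : X) ≠ x₀' := (g ⟨x, h⟩).2
      simp [h, h2]
  right_inv y := by
    by_cases h : y = x₀'
    · simp [h]
    · have h2 : (g.symm ⟨y, h⟩ : X) ≠ x₀ := (g.symm ⟨y, h⟩).2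
      simp [h, h2]

lemma extEquiv_apply_self {X : Type*} [DecidableEq X] (x₀ x₀' : X)
    (g : {x : X // x ≠ x₀} ≃ {x : X // x ≠ x₀'}) : extEquiv x₀ x₀' g x₀ = x₀' := by
  simp [extEquiv]

lemma extEquiv_apply_ne {X : Type*} [DecidableEq X] (x₀ x₀' : X)
    (g : {x : X // x ≠ x₀} ≃ {x : X // x ≠ x₀'}) (x : X) (h : x ≠ x₀) :
    extEquiv x₀ x₀' g x = (g ⟨x, h⟩ : X) := by
  simp [extEquiv, h]


/-- Restrict a bijection of `X` to a bijection between complements of `x₀` and `g x₀`. -/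
def resEquiv {X : Type*} (g : X ≃ X) (x₀ : X) : {x : X // x ≠ x₀} ≃ {x : X // x ≠ g x₀} where
  toFun x := ⟨g x, fun h => x.2 (g.injective h)⟩
  invFun y := ⟨g.symm y, fun h => y.2 (by simpa using congrArg g h)⟩
  left_inv x := by simp
  right_inv y := by simp

/-- Two unitary bases are equivalent iff for some associated tags the underlying
unitary systems are collectively unitarily equivalent. -/
theorem stmt10 {d : ℕ} (hd : 2 ≤ d) {X : Type*} [Fintype X] [DecidableEq X]
    (hX : Fintype.card X = d ^ 2)
    (U U' : X → Matrix (Fin d) (Fin d) ℂ)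
    (hunit : ∀ x, U x ∈ Matrix.unitaryGroup (Fin d) ℂ)
    (hunit' : ∀ x, U' x ∈ Matrix.unitaryGroup (Fin d) ℂ)
    (horth : ∀ x y, Matrix.trace ((U x)ᴴ * U y) = if x = y then (d : ℂ) else 0)
    (horth' : ∀ x y, Matrix.trace ((U' x)ᴴ * U' y) = if x = y then (d : ℂ) else 0) :
    (∃ V₁ ∈ Matrix.unitaryGroup (Fin d) ℂ, ∃ V₂ ∈ Matrix.unitaryGroup (Fin d) ℂ,
      ∃ g : X ≃ X, ∀ x, U' (g x) = V₁ * U x * V₂) ↔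
    (∃ x₀ x₀' : X, ∃ V ∈ Matrix.unitaryGroup (Fin d) ℂ,
      ∃ g : {x : X // x ≠ x₀} ≃ {x : X // x ≠ x₀'},
        ∀ x : {x : X // x ≠ x₀},
          (U' x₀')ᴴ * U' (g x) = Vᴴ * ((U x₀)ᴴ * U (x : X)) * V) := by
  have hXne : Nonempty X := by
    rw [← Fintype.card_pos_iff, hX]
    positivity
  constructor
  · rintro ⟨V₁, hV₁, V₂, hV₂, g, hg⟩
    obtain ⟨x₀⟩ := hXne
    refine ⟨x₀, g x₀, V₂, hV₂, resEquiv g x₀, ?_⟩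
    intro x
    have hcoe : ((resEquiv g x₀ x : X)) = g (x : X) := rfl
    rw [hcoe, hg x₀, hg (x : X), conjTranspose_mul, conjTranspose_mul]
    have hstar : V₁ᴴ * V₁ = 1 := (Unitary.mem_iff.mp hV₁).1
    calc V₂ᴴ * ((U x₀)ᴴ * V₁ᴴ) * (V₁ * U ↑x * V₂)
        = V₂ᴴ * ((U x₀)ᴴ * ((V₁ᴴ * V₁) * (U ↑x * V₂))) := by
          simp only [Matrix.mul_assoc]
      _ = V₂ᴴ * ((U x₀)ᴴ * U ↑x) * V₂ := by
          rw [hstar, Matrix.one_mul]; simp only [Matrix.mul_assoc]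
  · rintro ⟨x₀, x₀', V, hV, g, hg⟩
    have hU₀' : (U x₀)ᴴ * U x₀ = 1 := (Unitary.mem_iff.mp (hunit x₀)).1
    have hVstar : Vᴴ * V = 1 := (Unitary.mem_iff.mp hV).1
    have hV₁mem : U' x₀' * Vᴴ * (U x₀)ᴴ ∈ Matrix.unitaryGroup (Fin d) ℂ :=
      mul_mem (mul_mem (hunit' x₀') (Unitary.star_mem hV)) (Unitary.star_mem (hunit x₀))
    refine ⟨U' x₀' * Vᴴ * (U x₀)ᴴ, hV₁mem, V, hV, extEquiv x₀ x₀' g, ?_⟩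
    intro x
    by_cases h : x = x₀
    · subst h
      rw [extEquiv_apply_self]
      calc U' x₀' = U' x₀' * (Vᴴ * ((U x)ᴴ * (U x * V))) := by
            rw [← Matrix.mul_assoc (U x)ᴴ, hU₀', Matrix.one_mul, hVstar, Matrix.mul_one]
        _ = U' x₀' * Vᴴ * (U x)ᴴ * U x * V := by simp only [Matrix.mul_assoc]
    · rw [extEquiv_apply_ne x₀ x₀' g x h]
      have hgx := hg ⟨x, h⟩
      have hU₀'inv : U' x₀' * (U' x₀')ᴴ = 1 := (Unitary.mem_iff.mp (hunit' x₀')).2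
      calc U' (g ⟨x, h⟩ : X) = U' x₀' * ((U' x₀')ᴴ * U' (g ⟨x, h⟩ : X)) := by
            rw [← Matrix.mul_assoc, hU₀'inv, Matrix.one_mul]
        _ = U' x₀' * (Vᴴ * ((U x₀)ᴴ * U x) * V) := by rw [hgx]
        _ = U' x₀' * Vᴴ * (U x₀)ᴴ * U x * V := by simp only [Matrix.mul_assoc]
end

section
/- For the right-division latin square a·b = a b⁻¹ on a group G, the Latin criss-cross condition 'n·(n′·k) = n′·(n·k) for all k ∈ G' holds if and only if n n′ = n′ n, (n′ n⁻¹)² = e, and n′ n⁻¹ lies in the center Z(G). In particular, if Z(G) is trivial then the condition forces n = n′. -/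
/-- Latin criss-cross for the right-division latin square `λ(a,b) = a b⁻¹`:
`λ(n, λ(n', k)) = λ(n', λ(n, k))` for all `k` iff `n n' = n' n`, `(n' n⁻¹)² = e`
and `n' n⁻¹ ∈ Z(G)`. If the center is trivial, the condition forces `n = n'`. -/
theorem stmt17 {G : Type*} [Group G] (n n' : G) :
    ((∀ k : G, n * (n' * k⁻¹)⁻¹ = n' * (n * k⁻¹)⁻¹) ↔
      (n * n' = n' * n ∧ (n' * n⁻¹) ^ 2 = 1 ∧ n' * n⁻¹ ∈ Subgroup.center G)) ∧
    (Subgroup.center G = ⊥ →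
      (∀ k : G, n * (n' * k⁻¹)⁻¹ = n' * (n * k⁻¹)⁻¹) → n = n') := by
  have key : (∀ k : G, n * (n' * k⁻¹)⁻¹ = n' * (n * k⁻¹)⁻¹) ↔
      (n * n' = n' * n ∧ (n' * n⁻¹) ^ 2 = 1 ∧ n' * n⁻¹ ∈ Subgroup.center G) := by
    constructor
    · intro h
      have h1 : n * n'⁻¹ = n' * n⁻¹ := by have := h 1; simpa using this
      have hsq : (n' * n⁻¹) ^ 2 = 1 := by
        rw [sq]
        calc n' * n⁻¹ * (n' * n⁻¹) = n' * n⁻¹ * (n * n'⁻¹) := by rw [h1]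
        _ = 1 := by group
      have h2 : ∀ k : G, k * (n'⁻¹ * n) = (n⁻¹ * n') * k := by
        intro k
        have hk : n * (k * n'⁻¹) = n' * (k * n⁻¹) := by
          have := h k; simpa [mul_inv_rev, mul_assoc] using this
        calc k * (n'⁻¹ * n) = n⁻¹ * (n * (k * n'⁻¹) * n) := by group
        _ = n⁻¹ * (n' * (k * n⁻¹) * n) := by rw [hk]
        _ = (n⁻¹ * n') * k := by group
      have hcomm : n * n' = n' * n := by
        have h3 := h2 n
        have h4 : n * n'⁻¹ * n = n⁻¹ * n' * n := by
          calc n * n'⁻¹ * n = n * (n'⁻¹ * n) := by group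
          _ = n⁻¹ * n' * n := h3
        rw [h1] at h4
        have h5 : n' = n⁻¹ * n' * n := by
          calc n' = n' * n⁻¹ * n := by group
          _ = n⁻¹ * n' * n := h4
        calc n * n' = n * (n⁻¹ * n' * n) := congrArg (n * ·) h5
        _ = n' * n := by group
      have hc1 : n⁻¹ * n' = n' * n⁻¹ := by
        calc n⁻¹ * n' = n⁻¹ * n' * n * n⁻¹ := by group
        _ = n⁻¹ * (n' * n) * n⁻¹ := by group
        _ = n⁻¹ * (n * n') * n⁻¹ := by rw [hcomm]
        _ = n' * n⁻¹ := by group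
      have hc2 : n'⁻¹ * n = n' * n⁻¹ := by
        have h6 : n' * n⁻¹ = n * n'⁻¹ := h1.symm
        calc n'⁻¹ * n = n'⁻¹ * (n * n'⁻¹) * n' := by group
        _ = n'⁻¹ * (n' * n⁻¹) * n' := by rw [← h6]
        _ = n⁻¹ * n' := by group
        _ = n' * n⁻¹ := hc1
      refine ⟨hcomm, hsq, Subgroup.mem_center_iff.2 fun g => ?_⟩
      have := h2 g
      rw [hc1, hc2] at this
      exact this
    · rintro ⟨hcomm, hsq, hz⟩
      intro k
      rw [Subgroup.mem_center_iff] at hz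
      have h3 : (n' * n⁻¹) * (n' * n⁻¹) = 1 := by rw [← sq]; exact hsq
      have hinv : n'⁻¹ = n⁻¹ * (n' * n⁻¹) := by
        have h7 : n' * n⁻¹ = n * n'⁻¹ := by
          have : n' * n⁻¹ = (n' * n⁻¹)⁻¹ := by rw [eq_inv_iff_mul_eq_one]; exact h3
          rw [this]; group
        calc n'⁻¹ = n⁻¹ * (n * n'⁻¹) := by group
        _ = n⁻¹ * (n' * n⁻¹) := by rw [← h7]
      simp only [mul_inv_rev, inv_inv]
      rw [hinv]
      have h8 : n' = (n' * n⁻¹) * n := by group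
      calc n * (k * (n⁻¹ * (n' * n⁻¹))) = (n * (k * n⁻¹)) * (n' * n⁻¹) := by group
      _ = (n' * n⁻¹) * (n * (k * n⁻¹)) := hz _
      _ = ((n' * n⁻¹) * n) * (k * n⁻¹) := by group
      _ = n' * (k * n⁻¹) := by rw [← h8]
  refine ⟨key, fun hc h => ?_⟩
  obtain ⟨-, -, hz⟩ := key.1 h
  rw [hc, Subgroup.mem_bot] at hz
  exact (mul_inv_eq_one.1 hz).symm
end
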